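/- Let P be a finite poset and δ : P → {L, R}. Call a permutation σ of P δ-legal if for each x with δ(x) = L, x occurs before every element strictly less than x, and for each x with δ(x) = R, x occurs after every element strictly less than x. Then the number of δ-legal permutations of P is at most the number of linear extensions of P (i.e., of δ_R-legal permutations where δ_R ≡ R). -/

import Mathlib

open scoped Classical

/-- `σ` is `δ`-legal: each `x` with `δ x = true` (i.e. `L`) occurs before every element
strictly below it, and each `x` with `δ x = false` (i.e. `R`) occurs after every element
strictly below it. -/
def DeltaLegal {n : ℕ} {P : Type*} [PartialOrder P] (δ : P → Bool) (σ : Fin n ≃ P) : Prop :=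
  ∀ x y : P, y < x →
    (δ x = true → σ.symm x < σ.symm y) ∧ (δ x = false → σ.symm y < σ.symm x)

namespace DeltaLegalAux

variable {P : Type*} [PartialOrder P]

/-- The pairwise condition for a list to be a `δ`-legal arrangement. -/
def Qleg (δ : P → Bool) (a b : P) : Prop :=
  ¬(b < a ∧ δ a = false) ∧ ¬(a < b ∧ δ b = true)

/-- The pairwise condition for a list to be a linear extension. -/
def Qext (a b : P) : Prop := ¬ b < a

/-- The finset of arrangements of `s` satisfying pairwise condition `Q`. -/
noncomputable def lset (Q : P → P → Prop) (s : Finset P) : Finset (List P) :=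
  (s.toList.permutations.toFinset).filter (fun l => l.Pairwise Q)

lemma mem_lset {Q : P → P → Prop} {s : Finset P} {l : List P} :
    l ∈ lset Q s ↔ l.Nodup ∧ l.toFinset = s ∧ l.Pairwise Q := by
  classical
  simp only [lset, Finset.mem_filter, List.mem_toFinset, List.mem_permutations]
  constructor
  · rintro ⟨hperm, hpw⟩
    refine ⟨hperm.nodup_iff.2 s.nodup_toList, ?_, hpw⟩
    ext x
    rw [List.mem_toFinset, hperm.mem_iff, ← List.mem_toFinset, Finset.toList_toFinset]
  · rintro ⟨hnd, hfs, hpw⟩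
    refine ⟨List.perm_of_nodup_nodup_toFinset_eq hnd s.nodup_toList ?_, hpw⟩
    rw [hfs, Finset.toList_toFinset]

lemma lset_empty (Q : P → P → Prop) : lset Q (∅ : Finset P) = {([] : List P)} := by
  classical
  ext l
  simp only [mem_lset, Finset.mem_singleton]
  constructor
  · rintro ⟨-, hfs, -⟩
    rcases l with - | ⟨a, t⟩
    · rfl
    · exfalso
      have ha : a ∈ (a :: t).toFinset := by simp
      rw [hfs] at ha
      exact absurd ha (Finset.notMem_empty a)
  · rintro rfl
    exact ⟨List.nodup_nil, by simp, List.Pairwise.nil⟩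

lemma singleton_mem_lset {Q : P → P → Prop} (a : P) : [a] ∈ lset Q {a} :=
  mem_lset.2 ⟨List.nodup_singleton a, by simp, List.pairwise_singleton _ _⟩

/-- The set of possible "heads" for condition `Q` on `s`. -/
noncomputable def heads (Q : P → P → Prop) (s : Finset P) : Finset P :=
  s.filter (fun p => ∀ x ∈ s, x ≠ p → Q p x)

lemma mem_heads {Q : P → P → Prop} {s : Finset P} {p : P} :
    p ∈ heads Q s ↔ p ∈ s ∧ ∀ x ∈ s, x ≠ p → Q p x := Finset.mem_filter

lemma heads_subset (Q : P → P → Prop) (s : Finset P) : heads Q s ⊆ s :=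
  Finset.filter_subset _ _

/-- Head decomposition: each `Q`-arrangement of a nonempty `s` is a valid head
consed onto a `Q`-arrangement of the rest. -/
lemma head_decomp (Q : P → P → Prop) (s : Finset P) (hs : s.Nonempty) :
    (lset Q s).card ≤ ∑ p ∈ heads Q s, (lset Q (s.erase p)).card := by
  classical
  haveI : Inhabited P := ⟨hs.choose⟩
  rw [← Finset.card_sigma]
  apply Finset.card_le_card_of_injOn
    (fun l => (⟨l.headI, l.tail⟩ : (_ : P) × List P))
  · intro l hl
    rw [Finset.mem_coe, mem_lset] at hl
    obtain ⟨hnd, hfs, hpw⟩ := hl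
    have hlne : l ≠ [] := by
      rintro rfl
      rw [List.toFinset_nil] at hfs
      exact (Finset.nonempty_iff_ne_empty.1 hs) hfs.symm
    obtain ⟨a, t, rfl⟩ := List.exists_cons_of_ne_nil hlne
    simp only [List.headI_cons, List.tail_cons]
    rw [List.nodup_cons] at hnd
    obtain ⟨hat, htnd⟩ := hnd
    rw [List.pairwise_cons] at hpw
    obtain ⟨hQa, htpw⟩ := hpw
    have hfs' : insert a t.toFinset = s := by simpa using hfs
    have htfs : t.toFinset = s.erase a := by
      rw [← hfs', Finset.erase_insert (by simpa using hat)]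
    have has : a ∈ s := by rw [← hfs']; simp
    refine Finset.mem_sigma.2 ⟨?_, ?_⟩
    · rw [mem_heads]
      refine ⟨has, fun x hx hxa => ?_⟩
      apply hQa
      have hxt : x ∈ t.toFinset := by
        rw [htfs]; exact Finset.mem_erase.2 ⟨hxa, hx⟩
      simpa using hxt
    · exact mem_lset.2 ⟨htnd, htfs, htpw⟩
  · intro l1 h1 l2 h2 heq
    rw [Finset.mem_coe, mem_lset] at h1 h2
    have hne1 : l1 ≠ [] := by
      rintro rfl
      rw [List.toFinset_nil] at h1
      exact (Finset.nonempty_iff_ne_empty.1 hs) h1.2.1.symm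
    have hne2 : l2 ≠ [] := by
      rintro rfl
      rw [List.toFinset_nil] at h2
      exact (Finset.nonempty_iff_ne_empty.1 hs) h2.2.1.symm
    obtain ⟨a, t, rfl⟩ := List.exists_cons_of_ne_nil hne1
    obtain ⟨b, u, rfl⟩ := List.exists_cons_of_ne_nil hne2
    simp only [List.headI_cons, List.tail_cons, Sigma.mk.inj_iff, heq_eq_eq] at heq
    rw [heq.1, heq.2]

/-- Cons injection: consing elements of a set of valid heads gives distinct
`Q`-arrangements of `s`. -/
lemma cons_inject (Q : P → P → Prop) (s : Finset P) (M : Finset P)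
    (hMs : M ⊆ s) (hM : ∀ m ∈ M, ∀ x ∈ s, x ≠ m → Q m x) :
    ∑ m ∈ M, (lset Q (s.erase m)).card ≤ (lset Q s).card := by
  classical
  rw [← Finset.card_sigma]
  apply Finset.card_le_card_of_injOn (fun x => x.1 :: x.2)
  · rintro ⟨m, t⟩ hmt
    rw [Finset.mem_coe, Finset.mem_sigma] at hmt
    obtain ⟨hm, ht⟩ := hmt
    rw [mem_lset] at ht
    rw [Finset.mem_coe, mem_lset]
    obtain ⟨hnd, hfs, hpw⟩ := ht
    have hms : m ∈ s := hMs hm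
    have hmnt : m ∉ t := by
      intro hmem
      have h : m ∈ t.toFinset := by simpa using hmem
      rw [hfs] at h
      exact (Finset.mem_erase.1 h).1 rfl
    refine ⟨List.nodup_cons.2 ⟨hmnt, hnd⟩, ?_, ?_⟩
    · have h1 : (m :: t).toFinset = insert m t.toFinset := by simp
      rw [h1, hfs, Finset.insert_erase hms]
    · rw [List.pairwise_cons]
      refine ⟨fun x hx => ?_, hpw⟩
      have hx' : x ∈ t.toFinset := by simpa using hx
      rw [hfs, Finset.mem_erase] at hx'
      exact hM m hm x hx'.2 hx'.1
  · rintro ⟨m, t⟩ - ⟨m', t'⟩ - heq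
    simp only [List.cons.injEq] at heq
    obtain ⟨h1, h2⟩ := heq
    subst h1; subst h2; rfl

/-- Minimal elements of a finset. -/
noncomputable def mins (s : Finset P) : Finset P :=
  s.filter (fun m => ∀ x ∈ s, ¬ x < m)

lemma mem_mins {s : Finset P} {m : P} :
    m ∈ mins s ↔ m ∈ s ∧ ∀ x ∈ s, ¬ x < m := Finset.mem_filter

lemma mins_subset (s : Finset P) : mins s ⊆ s := Finset.filter_subset _ _

lemma mins_eq_heads_ext (s : Finset P) : mins s = heads (Qext (P := P)) s := by
  classical
  ext p
  rw [mem_mins, mem_heads]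
  constructor
  · rintro ⟨hp, h⟩
    exact ⟨hp, fun x hx _ => h x hx⟩
  · rintro ⟨hp, h⟩
    refine ⟨hp, fun x hx => ?_⟩
    by_cases hxp : x = p
    · subst hxp; exact lt_irrefl x
    · exact h x hx hxp

/-- Erasing a non-minimal element does not change the set of minimal elements. -/
lemma mins_erase_of_not_min {s : Finset P} {a : P} (ha : a ∈ s) (hna : a ∉ mins s) :
    mins (s.erase a) = mins s := by
  classical
  ext m
  rw [mem_mins, mem_mins]
  simp only [Finset.mem_erase]
  constructor
  · rintro ⟨⟨hma, hms⟩, hmin⟩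
    refine ⟨hms, fun x hx hxm => ?_⟩
    by_cases hxa : x = a
    · subst hxa
      have hnall : ¬ (∀ y ∈ s, ¬ y < x) := by
        intro hall
        exact hna (mem_mins.2 ⟨ha, hall⟩)
      push_neg at hnall
      obtain ⟨y, hy, hyx⟩ := hnall
      exact hmin y ⟨ne_of_lt hyx, hy⟩ (lt_trans hyx hxm)
    · exact hmin x ⟨hxa, hx⟩ hxm
  · rintro ⟨hms, hmin⟩
    have hma : m ≠ a := by
      rintro rfl
      exact hna (mem_mins.2 ⟨hms, hmin⟩)
    exact ⟨⟨hma, hms⟩, fun x hx => hmin x hx.2⟩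

lemma mins_erase_superset {s : Finset P} {a : P} :
    (mins s).erase a ⊆ mins (s.erase a) := by
  classical
  intro m hm
  rw [Finset.mem_erase] at hm
  obtain ⟨hma, hm⟩ := hm
  rw [mem_mins] at hm ⊢
  exact ⟨Finset.mem_erase.2 ⟨hma, hm.1⟩, fun x hx => hm.2 x (Finset.mem_of_mem_erase hx)⟩

/-- New minimal elements created by erasing `a`. -/
noncomputable def newmins (s : Finset P) (a : P) : Finset P :=
  mins (s.erase a) \ mins s

lemma newmins_disjoint {s : Finset P} {a : P} :
    Disjoint ((mins s).erase a) (newmins s a) := by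
  classical
  rw [Finset.disjoint_left]
  intro x hx hx'
  rw [newmins, Finset.mem_sdiff] at hx'
  exact hx'.2 (Finset.mem_of_mem_erase hx)

lemma mins_erase_split {s : Finset P} {a : P} :
    mins (s.erase a) = (mins s).erase a ∪ newmins s a := by
  classical
  have h1 : (mins s).erase a ⊆ mins (s.erase a) := mins_erase_superset
  have h2 : (mins s).erase a = mins (s.erase a) ∩ mins s := by
    ext m
    simp only [Finset.mem_erase, Finset.mem_inter]
    constructor
    · rintro ⟨hma, hm⟩
      exact ⟨h1 (Finset.mem_erase.2 ⟨hma, hm⟩), hm⟩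
    · rintro ⟨hm1, hm2⟩
      refine ⟨?_, hm2⟩
      rintro rfl
      exact (Finset.mem_erase.1 ((mins_subset _) hm1)).1 rfl
  rw [newmins, h2, Finset.union_comm]
  exact (Finset.sdiff_union_inter _ _).symm

lemma newmins_mem {s : Finset P} {a : P} {q : P} (ha : a ∈ mins s) (hq : q ∈ newmins s a) :
    q ∈ s ∧ q ≠ a ∧ a < q ∧ (∀ x ∈ s, x ≠ a → ¬ x < q) := by
  classical
  rw [newmins, Finset.mem_sdiff] at hq
  obtain ⟨hq1, hq2⟩ := hq
  rw [mem_mins] at hq1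
  obtain ⟨hqs, hqmin⟩ := hq1
  rw [Finset.mem_erase] at hqs
  have hmin' : ∀ x ∈ s, x ≠ a → ¬ x < q := by
    intro x hx hxa
    exact hqmin x (Finset.mem_erase.2 ⟨hxa, hx⟩)
  have haq : a < q := by
    by_contra haq
    apply hq2
    rw [mem_mins]
    refine ⟨hqs.2, fun x hx hxq => ?_⟩
    by_cases hxa : x = a
    · subst hxa; exact haq hxq
    · exact hmin' x hx hxa hxq
  exact ⟨hqs.2, hqs.1, haq, hmin'⟩

lemma erase_comm' (s : Finset P) (a b : P) : (s.erase a).erase b = (s.erase b).erase a := by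
  classical
  ext x
  simp only [Finset.mem_erase]
  tauto

/-- An antichain (with respect to `<`) as a predicate on finsets. -/
def IsAnti (A : Finset P) : Prop := ∀ a ∈ A, ∀ b ∈ A, ¬ a < b

/-- Number of linear extensions (as lists) of a finite subposet. -/
noncomputable def E (s : Finset P) : ℕ := (lset (Qext (P := P)) s).card

/-- The antichain lemma: for an antichain `A ⊆ s`,
`∑_{a ∈ A} E(s \ a) ≤ E(s)`. -/
lemma antichain_lemma : ∀ N : ℕ, ∀ s : Finset P, s.card ≤ N → ∀ A : Finset P, A ⊆ s →
    IsAnti A → ∑ a ∈ A, E (s.erase a) ≤ E s := by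
  classical
  intro N
  induction N with
  | zero =>
    intro s hs A hAs _
    have hse : s = ∅ := Finset.card_eq_zero.1 (Nat.le_zero.1 hs)
    subst hse
    have hAe : A = ∅ := Finset.subset_empty.1 hAs
    subst hAe
    simp
  | succ N ih =>
    intro s hs A hAs hanti
    rcases Finset.eq_empty_or_nonempty A with rfl | hAne
    · simp
    have hsne : s.Nonempty := by
      obtain ⟨a, ha⟩ := hAne
      exact ⟨a, hAs ha⟩
    by_cases hs1 : s.card = 1
    · obtain ⟨x, rfl⟩ := Finset.card_eq_one.1 hs1
      have hAx : A = {x} := Finset.eq_of_subset_of_card_le hAs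
        (by simpa using Finset.card_pos.2 hAne)
      subst hAx
      rw [Finset.sum_singleton, Finset.erase_singleton]
      have h1 : E (∅ : Finset P) = 1 := by
        simp [E, lset_empty]
      have h2 : 1 ≤ E ({x} : Finset P) :=
        Finset.card_pos.2 ⟨[x], singleton_mem_lset x⟩
      omega
    have hs2 : 2 ≤ s.card := by
      have := Finset.card_pos.2 hsne
      omega
    set M : Finset P := mins s with hM
    set A0 : Finset P := A ∩ M with hA0
    set A1 : Finset P := A \ M with hA1
    have hA0M : A0 ⊆ M := Finset.inter_subset_right
    have hA0A : A0 ⊆ A := Finset.inter_subset_left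
    have hMs : M ⊆ s := mins_subset s
    have hcard_erase : ∀ x ∈ s, (s.erase x).card ≤ N := by
      intro x hx
      have := Finset.card_erase_of_mem hx
      omega
    -- Step (1)
    have step1 : ∀ a ∈ A1, E (s.erase a) ≤ ∑ m ∈ M, E ((s.erase m).erase a) := by
      intro a haA1
      rw [hA1, Finset.mem_sdiff] at haA1
      obtain ⟨haA, haM⟩ := haA1
      have has : a ∈ s := hAs haA
      have hne : (s.erase a).Nonempty := by
        have hnall : ¬ (∀ y ∈ s, ¬ y < a) := by
          intro hall
          apply haM
          rw [hM, mem_mins]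
          exact ⟨has, hall⟩
        push_neg at hnall
        obtain ⟨y, hy, hya⟩ := hnall
        exact ⟨y, Finset.mem_erase.2 ⟨ne_of_lt hya, hy⟩⟩
      have haM' : a ∉ mins s := by rw [← hM]; exact haM
      calc E (s.erase a)
          ≤ ∑ p ∈ heads (Qext (P := P)) (s.erase a), E ((s.erase a).erase p) :=
            head_decomp _ _ hne
        _ = ∑ m ∈ M, E ((s.erase m).erase a) := by
            rw [← mins_eq_heads_ext, mins_erase_of_not_min has haM', ← hM]
            exact Finset.sum_congr rfl (fun m _ => by rw [erase_comm'])
    -- Step (2)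
    have step2 : ∀ m ∈ M,
        (∑ a ∈ A1, E ((s.erase m).erase a))
        + (∑ a ∈ A0.erase m, E ((s.erase m).erase a))
        + (if m ∈ A0 then ∑ q ∈ newmins s m, E ((s.erase m).erase q) else 0)
        ≤ E (s.erase m) := by
      intro m hmM
      have hms : m ∈ s := hMs hmM
      have hmM' : m ∈ mins s := by rw [← hM]; exact hmM
      by_cases hmA : m ∈ A0
      · rw [if_pos hmA]
        set C : Finset P := (A.erase m) ∪ newmins s m with hC
        have hmA' : m ∈ A := hA0A hmA
        have hCs : C ⊆ s.erase m := by
          intro x hx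
          rw [hC, Finset.mem_union] at hx
          rcases hx with hx | hx
          · exact Finset.mem_erase.2
              ⟨(Finset.mem_erase.1 hx).1, hAs (Finset.mem_of_mem_erase hx)⟩
          · obtain ⟨hxs, hxm, -, -⟩ := newmins_mem hmM' hx
            exact Finset.mem_erase.2 ⟨hxm, hxs⟩
        have hCanti : IsAnti C := by
          intro x hx y hy hxy
          rw [hC, Finset.mem_union] at hx hy
          rcases hx with hx | hx <;> rcases hy with hy | hy
          · exact hanti x (Finset.mem_of_mem_erase hx) y (Finset.mem_of_mem_erase hy) hxy
          · obtain ⟨-, -, -, hymin⟩ := newmins_mem hmM' hy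
            exact hymin x (hAs (Finset.mem_of_mem_erase hx)) (Finset.mem_erase.1 hx).1 hxy
          · obtain ⟨-, -, hmx, -⟩ := newmins_mem hmM' hx
            exact hanti m hmA' y (Finset.mem_of_mem_erase hy) (lt_trans hmx hxy)
          · obtain ⟨hxs, hxm, -, -⟩ := newmins_mem hmM' hx
            obtain ⟨-, -, -, hymin⟩ := newmins_mem hmM' hy
            exact hymin x hxs hxm hxy
        have hIH := ih (s.erase m) (hcard_erase m hms) C hCs hCanti
        have hdisj : Disjoint (A.erase m) (newmins s m) := by
          rw [Finset.disjoint_left]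
          intro x hx hx'
          obtain ⟨-, -, hmx, -⟩ := newmins_mem hmM' hx'
          exact hanti m hmA' x (Finset.mem_of_mem_erase hx) hmx
        rw [hC, Finset.sum_union hdisj] at hIH
        have hsplit : A.erase m = A1 ∪ A0.erase m := by
          ext x
          rw [Finset.mem_erase, Finset.mem_union, hA1, hA0, Finset.mem_sdiff,
            Finset.mem_erase, Finset.mem_inter]
          constructor
          · rintro ⟨hxm, hxA⟩
            by_cases hxM : x ∈ M
            · exact Or.inr ⟨hxm, hxA, hxM⟩
            · exact Or.inl ⟨hxA, hxM⟩
          · rintro (⟨hxA, hxM⟩ | ⟨hxm, hxA, -⟩)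
            · refine ⟨?_, hxA⟩
              rintro rfl
              exact hxM hmM
            · exact ⟨hxm, hxA⟩
        have hdisj2 : Disjoint A1 (A0.erase m) := by
          rw [Finset.disjoint_left]
          intro x hx hx'
          rw [hA1, Finset.mem_sdiff] at hx
          exact hx.2 (hA0M (Finset.mem_of_mem_erase hx'))
        rw [hsplit, Finset.sum_union hdisj2] at hIH
        omega
      · rw [if_neg hmA]
        have hmA' : m ∉ A := by
          intro h
          exact hmA (by rw [hA0]; exact Finset.mem_inter.2 ⟨h, hmM⟩)
        have hAsub : A ⊆ s.erase m := by
          intro x hx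
          refine Finset.mem_erase.2 ⟨?_, hAs hx⟩
          rintro rfl
          exact hmA' hx
        have hIH := ih (s.erase m) (hcard_erase m hms) A hAsub hanti
        have h1 : A0.erase m = A0 := Finset.erase_eq_of_notMem hmA
        have h2 : ∑ a ∈ A0, E ((s.erase m).erase a) + ∑ a ∈ A1, E ((s.erase m).erase a)
            = ∑ a ∈ A, E ((s.erase m).erase a) := by
          rw [hA0, hA1]
          exact Finset.sum_inter_add_sum_sdiff A M _
        rw [h1]
        omega
    -- Step (3)
    have step3 : ∀ a ∈ A0, E (s.erase a) ≤
        (∑ m ∈ M.erase a, E ((s.erase a).erase m))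
        + (∑ q ∈ newmins s a, E ((s.erase a).erase q)) := by
      intro a haA0
      have haM : a ∈ M := hA0M haA0
      have has : a ∈ s := hMs haM
      have hne : (s.erase a).Nonempty := by
        rw [← Finset.card_pos, Finset.card_erase_of_mem has]
        omega
      calc E (s.erase a)
          ≤ ∑ p ∈ heads (Qext (P := P)) (s.erase a), E ((s.erase a).erase p) :=
            head_decomp _ _ hne
        _ = ∑ p ∈ mins (s.erase a), E ((s.erase a).erase p) := by
            rw [mins_eq_heads_ext]
        _ = _ := by
            rw [mins_erase_split, Finset.sum_union newmins_disjoint, ← hM]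
    -- Reindexing the pairs sum
    have reindex : ∑ a ∈ A0, ∑ m ∈ M.erase a, E ((s.erase a).erase m)
        = ∑ m ∈ M, ∑ a ∈ A0.erase m, E ((s.erase m).erase a) := by
      have lhs_eq : ∀ a : P, ∑ m ∈ M.erase a, E ((s.erase a).erase m)
          = ∑ m ∈ M, if m ≠ a then E ((s.erase a).erase m) else 0 := by
        intro a
        rw [← Finset.sum_filter]
        apply Finset.sum_congr
        · ext m
          simp only [Finset.mem_erase, Finset.mem_filter]
          tauto
        · intros; rfl
      have rhs_eq : ∀ m : P, ∑ a ∈ A0.erase m, E ((s.erase m).erase a)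
          = ∑ a ∈ A0, if a ≠ m then E ((s.erase m).erase a) else 0 := by
        intro m
        rw [← Finset.sum_filter]
        apply Finset.sum_congr
        · ext a
          simp only [Finset.mem_erase, Finset.mem_filter]
          tauto
        · intros; rfl
      calc ∑ a ∈ A0, ∑ m ∈ M.erase a, E ((s.erase a).erase m)
          = ∑ a ∈ A0, ∑ m ∈ M, if m ≠ a then E ((s.erase a).erase m) else 0 :=
            Finset.sum_congr rfl (fun a _ => lhs_eq a)
        _ = ∑ m ∈ M, ∑ a ∈ A0, if m ≠ a then E ((s.erase a).erase m) else 0 :=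
            Finset.sum_comm
        _ = ∑ m ∈ M, ∑ a ∈ A0, if a ≠ m then E ((s.erase m).erase a) else 0 := by
            apply Finset.sum_congr rfl
            intro m _
            apply Finset.sum_congr rfl
            intro a _
            rw [erase_comm']
            by_cases h : a = m
            · subst h; simp
            · rw [if_pos (Ne.symm h), if_pos h]
        _ = ∑ m ∈ M, ∑ a ∈ A0.erase m, E ((s.erase m).erase a) :=
            Finset.sum_congr rfl (fun m _ => (rhs_eq m).symm)
    -- newmins sum reindex
    have newreindex : ∑ a ∈ A0, ∑ q ∈ newmins s a, E ((s.erase a).erase q)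
        = ∑ m ∈ M, (if m ∈ A0 then ∑ q ∈ newmins s m, E ((s.erase m).erase q) else 0) := by
      rw [Finset.sum_ite_mem, Finset.inter_eq_right.2 hA0M]
    -- Step (6)
    have step6 : ∑ m ∈ M, E (s.erase m) ≤ E s := by
      apply cons_inject _ _ _ hMs
      intro m hm x hx hxm
      have hm' : m ∈ mins s := by rw [← hM]; exact hm
      exact (mem_mins.1 hm').2 x hx
    -- Assemble
    have hsum_split : ∑ a ∈ A, E (s.erase a)
        = ∑ a ∈ A0, E (s.erase a) + ∑ a ∈ A1, E (s.erase a) := by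
      rw [hA0, hA1]
      exact (Finset.sum_inter_add_sum_sdiff A M _).symm
    have b1 : ∑ a ∈ A1, E (s.erase a) ≤ ∑ m ∈ M, ∑ a ∈ A1, E ((s.erase m).erase a) := by
      calc ∑ a ∈ A1, E (s.erase a)
          ≤ ∑ a ∈ A1, ∑ m ∈ M, E ((s.erase m).erase a) := Finset.sum_le_sum step1
        _ = ∑ m ∈ M, ∑ a ∈ A1, E ((s.erase m).erase a) := Finset.sum_comm
    have b3 : ∑ a ∈ A0, E (s.erase a)
        ≤ ∑ m ∈ M, ∑ a ∈ A0.erase m, E ((s.erase m).erase a)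
          + ∑ m ∈ M, (if m ∈ A0 then ∑ q ∈ newmins s m, E ((s.erase m).erase q) else 0) := by
      calc ∑ a ∈ A0, E (s.erase a)
          ≤ ∑ a ∈ A0, ((∑ m ∈ M.erase a, E ((s.erase a).erase m))
              + (∑ q ∈ newmins s a, E ((s.erase a).erase q))) := Finset.sum_le_sum step3
        _ = ∑ a ∈ A0, ∑ m ∈ M.erase a, E ((s.erase a).erase m)
            + ∑ a ∈ A0, ∑ q ∈ newmins s a, E ((s.erase a).erase q) :=
            Finset.sum_add_distrib
        _ = _ := by rw [reindex, newreindex]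
    have b2 : ∑ m ∈ M, ∑ a ∈ A1, E ((s.erase m).erase a)
        + (∑ m ∈ M, ∑ a ∈ A0.erase m, E ((s.erase m).erase a)
          + ∑ m ∈ M, (if m ∈ A0 then ∑ q ∈ newmins s m, E ((s.erase m).erase q) else 0))
        ≤ ∑ m ∈ M, E (s.erase m) := by
      rw [← Finset.sum_add_distrib, ← Finset.sum_add_distrib]
      apply Finset.sum_le_sum
      intro m hm
      have := step2 m hm
      omega
    omega

/-- Legal heads form an antichain. -/
lemma heads_leg_anti (δ : P → Bool) (s : Finset P) : IsAnti (heads (Qleg δ) s) := by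
  intro p hp p' hp' hpp'
  rw [mem_heads] at hp hp'
  have hne : p' ≠ p := by
    rintro rfl
    exact lt_irrefl _ hpp'
  have h1 := hp.2 p' hp'.1 hne
  have h2 := hp'.2 p hp.1 (Ne.symm hne)
  have hfalse : δ p' = false := by
    cases h : δ p' with
    | false => rfl
    | true => exact absurd ⟨hpp', h⟩ h1.2
  exact h2.1 ⟨hpp', hfalse⟩

/-- The list-level main theorem. -/
lemma main_list (δ : P → Bool) : ∀ N : ℕ, ∀ s : Finset P, s.card ≤ N →
    (lset (Qleg δ) s).card ≤ (lset (Qext (P := P)) s).card := by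
  classical
  intro N
  induction N with
  | zero =>
    intro s hs
    have hse : s = ∅ := Finset.card_eq_zero.1 (Nat.le_zero.1 hs)
    subst hse
    rw [lset_empty, lset_empty]
  | succ N ih =>
    intro s hs
    rcases Finset.eq_empty_or_nonempty s with rfl | hsne
    · rw [lset_empty, lset_empty]
    have hcard_erase : ∀ x ∈ s, (s.erase x).card ≤ N := by
      intro x hx
      have h1 := Finset.card_erase_of_mem hx
      have h2 := Finset.card_pos.2 ⟨x, hx⟩
      omega
    calc (lset (Qleg δ) s).card
        ≤ ∑ p ∈ heads (Qleg δ) s, (lset (Qleg δ) (s.erase p)).card :=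
          head_decomp _ _ hsne
      _ ≤ ∑ p ∈ heads (Qleg δ) s, (lset (Qext (P := P)) (s.erase p)).card := by
          apply Finset.sum_le_sum
          intro p hp
          exact ih (s.erase p) (hcard_erase p (heads_subset _ _ hp))
      _ ≤ (lset (Qext (P := P)) s).card :=
          antichain_lemma s.card s le_rfl (heads (Qleg δ) s)
            (heads_subset _ _) (heads_leg_anti δ s)

end DeltaLegalAux

theorem card_delta_legal_le_card_linear_extensions {n : ℕ} {P : Type*}
    [PartialOrder P] [Fintype P] (hcard : Fintype.card P = n) (δ : P → Bool) :
    (Finset.univ.filter fun σ : Fin n ≃ P => DeltaLegal δ σ).card ≤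
      (Finset.univ.filter fun σ : Fin n ≃ P => ∀ i j : Fin n, σ i < σ j → i < j).card := by
  classical
  calc (Finset.univ.filter fun σ : Fin n ≃ P => DeltaLegal δ σ).card
      ≤ (DeltaLegalAux.lset (DeltaLegalAux.Qleg δ) (Finset.univ : Finset P)).card := by
        apply Finset.card_le_card_of_injOn (fun σ : Fin n ≃ P => List.ofFn (fun i => σ i))
        · intro σ hσ
          rw [Finset.mem_coe, Finset.mem_filter] at hσ
          obtain ⟨-, hleg⟩ := hσ
          rw [Finset.mem_coe, DeltaLegalAux.mem_lset]
          refine ⟨List.nodup_ofFn.2 σ.injective, ?_, ?_⟩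
          · ext x
            simpa [List.mem_ofFn, Equiv.range_eq_univ] using ⟨σ.symm x, σ.apply_symm_apply x⟩
          · rw [List.pairwise_ofFn]
            intro i j hij
            refine ⟨?_, ?_⟩
            · rintro ⟨hlt, hf⟩
              have h := (hleg _ _ hlt).2 hf
              simp only [Equiv.symm_apply_apply] at h
              exact absurd hij (not_lt.2 h.le)
            · rintro ⟨hlt, hf⟩
              have h := (hleg _ _ hlt).1 hf
              simp only [Equiv.symm_apply_apply] at h
              exact absurd hij (not_lt.2 h.le)
        · rintro σ1 - σ2 - heq
          exact Equiv.coe_fn_injective (List.ofFn_inj.1 heq)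
    _ ≤ (DeltaLegalAux.lset (DeltaLegalAux.Qext (P := P)) (Finset.univ : Finset P)).card :=
        DeltaLegalAux.main_list δ (Finset.univ : Finset P).card _ le_rfl
    _ ≤ (Finset.univ.filter fun σ : Fin n ≃ P => ∀ i j : Fin n, σ i < σ j → i < j).card := by
        apply Finset.card_le_card_of_surjOn (fun σ : Fin n ≃ P => List.ofFn (fun i => σ i))
        intro l hl
        rw [Finset.mem_coe, DeltaLegalAux.mem_lset] at hl
        obtain ⟨hnd, hfs, hpw⟩ := hl
        have hlen : l.length = n := by
          have h1 : l.toFinset.card = l.length := List.toFinset_card_of_nodup hnd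
          rw [hfs] at h1
          rw [← h1, Finset.card_univ, hcard]
        have hinj : Function.Injective l.get := List.nodup_iff_injective_get.1 hnd
        have hfinj : Function.Injective (fun i : Fin n => l.get (Fin.cast hlen.symm i)) := by
          intro i j hij
          have h := hinj hij
          have h2 := congrArg Fin.val h
          simp only [Fin.coe_cast] at h2
          exact Fin.ext h2
        have hfbij : Function.Bijective (fun i : Fin n => l.get (Fin.cast hlen.symm i)) :=
          (Fintype.bijective_iff_injective_and_card _).2 ⟨hfinj, by simp [hcard]⟩
        refine ⟨Equiv.ofBijective _ hfbij, ?_, ?_⟩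
        · rw [Finset.mem_coe, Finset.mem_filter]
          refine ⟨Finset.mem_univ _, ?_⟩
          intro i j hlt
          rw [List.pairwise_iff_get] at hpw
          by_contra hnij
          push_neg at hnij
          rcases lt_or_eq_of_le hnij with hji | hji
          · exact hpw _ _ (Fin.cast_strictMono hlen.symm hji) hlt
          · subst hji
            exact lt_irrefl _ hlt
        · apply List.ext_get
          · rw [List.length_ofFn, hlen]
          · intro k h1 h2
            rw [List.get_ofFn]
            show l.get _ = l.get _
            exact congrArg l.get (Fin.ext rfl)
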